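/- Let λ₁, λ₂, λ₃ ∈ ℂ be pairwise distinct, let λ₂ᵖᵐˡ, λ₃ᵖᵐˡ, a ∈ ℂ with a ≠ 0, λ₂ᵖᵐˡ ≠ λ₁ and λ₃ᵖᵐˡ ≠ λ₁, and let α₁, α₂ ∈ ℂ be given. Suppose α₃, β₁, β₂ ∈ ℂ satisfy the interface system of the first PML model: (i) α₁·(λ₁ − λ₂)·(λ₁ − λ₃) = β₁·a²·(λ₁ − λ₂ᵖᵐˡ)·(λ₁ − λ₃ᵖᵐˡ); (ii) α₂·(λ₂ − λ₁) + α₃·(λ₃ − λ₁) = β₂·(λ₂ᵖᵐˡ − λ₁); (iii) α₂·(λ₂ − λ₁)·λ₂ + α₃·(λ₃ − λ₁)·λ₃ = β₂·(λ₂ᵖᵐˡ − λ₁)·λ₂. Then α₃ = 0, β₂ = α₂·(λ₂ − λ₁)/(λ₂ᵖᵐˡ − λ₁), and β₁ = α₁·(λ₁ − λ₂)·(λ₁ − λ₃)/(a²·(λ₁ − λ₂ᵖᵐˡ)·(λ₁ − λ₃ᵖᵐˡ)). In particular the reflected-mode coefficient α₃ vanishes: the layer is perfectly matched. -/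
import Mathlib


/-- The interface system of the first PML model forces the reflected-mode coefficient
`α₃` to vanish (the layer is perfectly matched), and determines the transmitted
coefficients `β₁`, `β₂` explicitly. -/
theorem first_pml_perfectly_matched
    (lam₁ lam₂ lam₃ lam₂p lam₃p a α₁ α₂ α₃ β₁ β₂ : ℂ)
    (hd12 : lam₁ ≠ lam₂) (hd13 : lam₁ ≠ lam₃) (hd23 : lam₂ ≠ lam₃)
    (ha : a ≠ 0) (h2p : lam₂p ≠ lam₁) (h3p : lam₃p ≠ lam₁)
    (h1 : α₁ * (lam₁ - lam₂) * (lam₁ - lam₃) =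
      β₁ * a ^ 2 * (lam₁ - lam₂p) * (lam₁ - lam₃p))
    (h2 : α₂ * (lam₂ - lam₁) + α₃ * (lam₃ - lam₁) = β₂ * (lam₂p - lam₁))
    (h3 : α₂ * (lam₂ - lam₁) * lam₂ + α₃ * (lam₃ - lam₁) * lam₃ =
      β₂ * (lam₂p - lam₁) * lam₂) :
    α₃ = 0 ∧ β₂ = α₂ * (lam₂ - lam₁) / (lam₂p - lam₁) ∧
    β₁ = α₁ * (lam₁ - lam₂) * (lam₁ - lam₃) /
      (a ^ 2 * (lam₁ - lam₂p) * (lam₁ - lam₃p)) := by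
  have h31 : lam₃ - lam₁ ≠ 0 := sub_ne_zero.2 (Ne.symm hd13)
  have h32 : lam₃ - lam₂ ≠ 0 := sub_ne_zero.2 (Ne.symm hd23)
  have h21 : lam₂p - lam₁ ≠ 0 := sub_ne_zero.2 h2p
  have h12p : lam₁ - lam₂p ≠ 0 := sub_ne_zero.2 (Ne.symm h2p)
  have h13p : lam₁ - lam₃p ≠ 0 := sub_ne_zero.2 (Ne.symm h3p)
  have key : α₃ * ((lam₃ - lam₁) * (lam₃ - lam₂)) = 0 := by linear_combination h3 - lam₂ * h2
  have ha3 : α₃ = 0 := by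
    rcases mul_eq_zero.1 key with h | h
    · exact h
    · exact absurd h (mul_ne_zero h31 h32)
  refine ⟨ha3, ?_, ?_⟩
  · field_simp
    linear_combination -h2 + (lam₃ - lam₁) * ha3
  · field_simp
    linear_combination -h1
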